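/- arXiv:0907.2605 — 5 statements merged into one kernel-verified Lean document; each statement's English description precedes it below -/
import Mathlib

section
/- Let ω : (0,∞) → (0,∞) and define p_ω = sup{ p > 0 : ω(st) ≤ t^p ω(s) for all s > 0 and t ∈ (0,1) }. If this supremum is finite and the defining set is nonempty, then ω is of strictly lower type p_ω, i.e., ω(st) ≤ t^{p_ω} ω(s) for all s > 0 and t ∈ (0,1). In other words, the strictly critical lower type index is attained. -/
/-- The strictly critical lower type index is attained. -/
theorem strictly_lower_type_index_attained (ω : ℝ → ℝ)
    (hpos : ∀ t : ℝ, 0 < t → 0 < ω t)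
    (S : Set ℝ)
    (hS : S = {p : ℝ | 0 < p ∧ ∀ s : ℝ, 0 < s → ∀ t : ℝ, t ∈ Set.Ioo (0:ℝ) 1 →
      ω (s * t) ≤ t ^ p * ω s})
    (hne : S.Nonempty) (hbdd : BddAbove S) :
    ∀ s : ℝ, 0 < s → ∀ t : ℝ, t ∈ Set.Ioo (0:ℝ) 1 →
      ω (s * t) ≤ t ^ (sSup S) * ω s := by
  intro s hs t ht
  obtain ⟨u, hu_mono, hu_tendsto, hu_mem⟩ := exists_seq_tendsto_sSup hne hbdd
  have key : ∀ n, ω (s * t) ≤ t ^ (u n) * ω s := by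
    intro n
    have := hu_mem n
    rw [hS] at this
    exact this.2 s hs t ht
  have hcont : Filter.Tendsto (fun n => t ^ (u n) * ω s) Filter.atTop
      (nhds (t ^ (sSup S) * ω s)) := by
    have h1 : ContinuousAt (fun p : ℝ => t ^ p) (sSup S) :=
      Real.continuousAt_const_rpow (ne_of_gt ht.1)
    have : Filter.Tendsto (fun n => t ^ (u n)) Filter.atTop (nhds (t ^ (sSup S))) :=
      h1.tendsto.comp hu_tendsto
    exact this.mul tendsto_const_nhds
  exact ge_of_tendsto' hcont key
end

section
/- Let 0 < p₀ ≤ p₁ ≤ 1 and let ω : (0,∞) → (0,∞) be strictly increasing and bijective onto (0,∞), and define ρ(t) = t^{-1} / ω^{-1}(t^{-1}) for t > 0. Then ω is of type (p₀, p₁) (i.e., of lower type p₀ and upper type p₁) if and only if ρ is of type (1/p₁ − 1, 1/p₀ − 1). -/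
/-- Upper type `q` for a positive function on `(0,∞)`. -/
def UpperType (f : ℝ → ℝ) (q : ℝ) : Prop :=
  ∃ C : ℝ, 0 < C ∧ ∀ t : ℝ, 1 ≤ t → ∀ s : ℝ, 0 < s → f (s * t) ≤ C * t ^ q * f s

/-- Lower type `q` for a positive function on `(0,∞)`. -/
def LowerType (f : ℝ → ℝ) (q : ℝ) : Prop :=
  ∃ C : ℝ, 0 < C ∧ ∀ t : ℝ, 0 < t → t ≤ 1 → ∀ s : ℝ, 0 < s → f (s * t) ≤ C * t ^ q * f s

lemma lower_to_upper_inv (f g : ℝ → ℝ) (q : ℝ) (hq : 0 < q)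
    (hfpos : ∀ t : ℝ, 0 < t → 0 < f t)
    (hgpos : ∀ t : ℝ, 0 < t → 0 < g t)
    (hfg : ∀ t : ℝ, 0 < t → f (g t) = t)
    (hgf : ∀ t : ℝ, 0 < t → g (f t) = t)
    (hgmono : ∀ a b : ℝ, 0 < a → a ≤ b → g a ≤ g b) :
    LowerType f q → UpperType g (1/q) := by
  rintro ⟨C, hC, h⟩
  have hq' : q ≠ 0 := ne_of_gt hq
  set C₁ : ℝ := max C 1 with hC₁def
  have hC₁ : (1:ℝ) ≤ C₁ := le_max_right _ _
  have hCC₁ : C ≤ C₁ := le_max_left _ _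
  have hC₁pos : (0:ℝ) < C₁ := lt_of_lt_of_le one_pos hC₁
  refine ⟨C₁ ^ (1/q), Real.rpow_pos_of_pos hC₁pos _, ?_⟩
  intro t ht a ha
  have htpos : 0 < t := lt_of_lt_of_le one_pos ht
  have hat : 0 < a * t := mul_pos ha htpos
  have hCt1 : (1:ℝ) ≤ C₁ * t := by nlinarith
  have hCtpos : (0:ℝ) < C₁ * t := lt_of_lt_of_le one_pos hCt1
  set τ : ℝ := (C₁ * t) ^ (-(1/q)) with hτdef
  have hτpos : 0 < τ := Real.rpow_pos_of_pos hCtpos _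
  have hτle : τ ≤ 1 :=
    Real.rpow_le_one_of_one_le_of_nonpos hCt1 (neg_nonpos.mpr (by positivity))
  have hσ : 0 < g (a*t) := hgpos _ hat
  have key := h τ hτpos hτle (g (a*t)) hσ
  have hτq : τ ^ q = (C₁ * t)⁻¹ := by
    rw [hτdef, ← Real.rpow_mul (le_of_lt hCtpos),
      show -(1/q) * q = -1 by field_simp, Real.rpow_neg_one]
  rw [hfg _ hat, hτq] at key
  have heq : C * (C₁*t)⁻¹ * (a*t) = (C/C₁) * a := by field_simp
  rw [heq] at key
  have hle1 : C / C₁ ≤ 1 := (div_le_one hC₁pos).mpr hCC₁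
  have key2 : f (g (a*t) * τ) ≤ a := by nlinarith
  have hgτ : 0 < g (a*t) * τ := mul_pos hσ hτpos
  have step : g (a*t) * τ ≤ g a := by
    have h1 : g (f (g (a*t) * τ)) ≤ g a := hgmono _ _ (hfpos _ hgτ) key2
    rwa [hgf _ hgτ] at h1
  have hτinv : τ⁻¹ = C₁ ^ (1/q) * t ^ (1/q) := by
    rw [hτdef, Real.rpow_neg (le_of_lt hCtpos), inv_inv,
        Real.mul_rpow (le_of_lt hC₁pos) (le_of_lt htpos)]
  have hfin : g (a*t) ≤ g a * τ⁻¹ := by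
    rw [← div_eq_mul_inv]
    exact (le_div_iff₀ hτpos).mpr step
  rw [hτinv] at hfin
  nlinarith [hfin]

lemma upper_to_lower_inv (f g : ℝ → ℝ) (q : ℝ) (hq : 0 < q)
    (hfpos : ∀ t : ℝ, 0 < t → 0 < f t)
    (hgpos : ∀ t : ℝ, 0 < t → 0 < g t)
    (hfg : ∀ t : ℝ, 0 < t → f (g t) = t)
    (hgf : ∀ t : ℝ, 0 < t → g (f t) = t)
    (hgmono : ∀ a b : ℝ, 0 < a → a ≤ b → g a ≤ g b) :
    UpperType f q → LowerType g (1/q) := by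
  rintro ⟨C, hC, h⟩
  have hq' : q ≠ 0 := ne_of_gt hq
  set C₁ : ℝ := max C 1 with hC₁def
  have hC₁ : (1:ℝ) ≤ C₁ := le_max_right _ _
  have hCC₁ : C ≤ C₁ := le_max_left _ _
  have hC₁pos : (0:ℝ) < C₁ := lt_of_lt_of_le one_pos hC₁
  refine ⟨C₁ ^ (2/q), Real.rpow_pos_of_pos hC₁pos _, ?_⟩
  intro t ht0 ht1 a ha
  have hat : 0 < a * t := mul_pos ha ht0
  have hga : 0 < g a := hgpos a ha
  have hσ : 0 < g (a*t) := hgpos _ hat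
  have hCtpos : 0 < C₁ * t := mul_pos hC₁pos ht0
  have h12 : C₁ ^ (1/q) ≤ C₁ ^ (2/q) :=
    Real.rpow_le_rpow_of_exponent_le hC₁ (by
      rw [div_le_div_iff₀ hq hq]; nlinarith)
  rcases le_or_gt (C₁ * t) 1 with hcase | hcase
  · set τ : ℝ := (C₁ * t) ^ (-(1/q)) with hτdef
    have hτpos : 0 < τ := Real.rpow_pos_of_pos hCtpos _
    have hτ1 : 1 ≤ τ :=
      Real.one_le_rpow_of_pos_of_le_one_of_nonpos hCtpos hcase
        (neg_nonpos.mpr (by positivity))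
    have key := h τ hτ1 (g (a*t)) hσ
    have hτq : τ ^ q = (C₁ * t)⁻¹ := by
      rw [hτdef, ← Real.rpow_mul (le_of_lt hCtpos),
        show -(1/q) * q = -1 by field_simp, Real.rpow_neg_one]
    rw [hfg _ hat, hτq] at key
    have heq : C * (C₁*t)⁻¹ * (a*t) = (C/C₁) * a := by field_simp
    rw [heq] at key
    have hle1 : C / C₁ ≤ 1 := (div_le_one hC₁pos).mpr hCC₁
    have key2 : f (g (a*t) * τ) ≤ a := by nlinarith
    have hgτ : 0 < g (a*t) * τ := mul_pos hσ hτpos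
    have step : g (a*t) * τ ≤ g a := by
      have h1 : g (f (g (a*t) * τ)) ≤ g a := hgmono _ _ (hfpos _ hgτ) key2
      rwa [hgf _ hgτ] at h1
    have hτinv : τ⁻¹ = C₁ ^ (1/q) * t ^ (1/q) := by
      rw [hτdef, Real.rpow_neg (le_of_lt hCtpos), inv_inv,
          Real.mul_rpow (le_of_lt hC₁pos) (le_of_lt ht0)]
    have hfin : g (a*t) ≤ g a * τ⁻¹ := by
      rw [← div_eq_mul_inv]
      exact (le_div_iff₀ hτpos).mpr step
    rw [hτinv] at hfin
    have htq : (0:ℝ) ≤ t ^ (1/q) := le_of_lt (Real.rpow_pos_of_pos ht0 _)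
    nlinarith [mul_le_mul_of_nonneg_right h12 htq]
  · have h1 : g (a*t) ≤ g a := hgmono _ _ hat (by nlinarith)
    have h2 : (1:ℝ) ≤ (C₁*t) ^ (1/q) := by
      have := Real.rpow_le_rpow zero_le_one hcase.le (by positivity : (0:ℝ) ≤ 1/q)
      rwa [Real.one_rpow] at this
    rw [Real.mul_rpow (le_of_lt hC₁pos) (le_of_lt ht0)] at h2
    have htq : (0:ℝ) ≤ t ^ (1/q) := le_of_lt (Real.rpow_pos_of_pos ht0 _)
    nlinarith [mul_le_mul_of_nonneg_right h12 htq]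

lemma rho_point (ωinv ρ : ℝ → ℝ)
    (hinv_pos : ∀ t : ℝ, 0 < t → 0 < ωinv t)
    (hρ : ∀ t : ℝ, 0 < t → ρ t = t⁻¹ / ωinv t⁻¹)
    (q C t : ℝ) (ht : 0 < t) :
    (∀ s : ℝ, 0 < s → ρ (s * t) ≤ C * t ^ (q - 1) * ρ s) ↔
      (∀ u : ℝ, 0 < u → ωinv (u * t) ≤ C * t ^ q * ωinv u) := by
  have htq : t ^ q = t ^ (q-1) * t := by
    rw [← Real.rpow_add_one (ne_of_gt ht) (q-1), sub_add_cancel]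
  constructor
  · intro h u hu
    have hut : 0 < u * t := mul_pos hu ht
    have hA : 0 < ωinv u := hinv_pos u hu
    have hB : 0 < ωinv (u*t) := hinv_pos _ hut
    have hs : 0 < (u*t)⁻¹ := by positivity
    have hst : (u*t)⁻¹ * t = u⁻¹ := by field_simp
    have key := h ((u*t)⁻¹) hs
    rw [hst, hρ u⁻¹ (by positivity), hρ ((u*t)⁻¹) hs, inv_inv, inv_inv] at key
    -- key : u / ωinv u ≤ C * t^(q-1) * ((u*t) / ωinv (u*t))
    rw [show C * t^(q-1) * ((u*t) / ωinv (u*t))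
        = (C * t^(q-1) * (u*t)) / ωinv (u*t) by ring] at key
    have key2 := (div_le_div_iff₀ hA hB).mp key
    rw [htq]
    nlinarith [key2, hu]
  · intro h s hs
    have hst : 0 < s * t := mul_pos hs ht
    set u : ℝ := (s*t)⁻¹ with hu_def
    have hu : 0 < u := by positivity
    have hA : 0 < ωinv u := hinv_pos u hu
    have hB : 0 < ωinv (u*t) := hinv_pos _ (mul_pos hu ht)
    have key := h u hu
    have hust : u * t = s⁻¹ := by rw [hu_def]; field_simp
    rw [hρ (s*t) hst, hρ s hs, ← hu_def, ← hust]
    -- goal : u / ωinv u ≤ C * t^(q-1) * ((u*t) / ωinv (u*t))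
    rw [show C * t^(q-1) * ((u*t) / ωinv (u*t))
        = (C * t^(q-1) * (u*t)) / ωinv (u*t) by ring,
      div_le_div_iff₀ hA hB]
    rw [htq] at key
    nlinarith [key, hu]

lemma rho_upper_iff (ωinv ρ : ℝ → ℝ)
    (hinv_pos : ∀ t : ℝ, 0 < t → 0 < ωinv t)
    (hρ : ∀ t : ℝ, 0 < t → ρ t = t⁻¹ / ωinv t⁻¹) (q : ℝ) :
    UpperType ρ (q - 1) ↔ UpperType ωinv q := by
  constructor
  · rintro ⟨C, hC, h⟩
    exact ⟨C, hC, fun t ht =>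
      (rho_point ωinv ρ hinv_pos hρ q C t (lt_of_lt_of_le one_pos ht)).mp (h t ht)⟩
  · rintro ⟨C, hC, h⟩
    exact ⟨C, hC, fun t ht =>
      (rho_point ωinv ρ hinv_pos hρ q C t (lt_of_lt_of_le one_pos ht)).mpr (h t ht)⟩

lemma rho_lower_iff (ωinv ρ : ℝ → ℝ)
    (hinv_pos : ∀ t : ℝ, 0 < t → 0 < ωinv t)
    (hρ : ∀ t : ℝ, 0 < t → ρ t = t⁻¹ / ωinv t⁻¹) (q : ℝ) :
    LowerType ρ (q - 1) ↔ LowerType ωinv q := by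
  constructor
  · rintro ⟨C, hC, h⟩
    exact ⟨C, hC, fun t ht0 ht1 =>
      (rho_point ωinv ρ hinv_pos hρ q C t ht0).mp (h t ht0 ht1)⟩
  · rintro ⟨C, hC, h⟩
    exact ⟨C, hC, fun t ht0 ht1 =>
      (rho_point ωinv ρ hinv_pos hρ q C t ht0).mpr (h t ht0 ht1)⟩

theorem type_duality_omega_rho (ω ωinv : ℝ → ℝ) (p₀ p₁ : ℝ)
    (hp₀ : 0 < p₀) (hp₀₁ : p₀ ≤ p₁) (hp₁ : p₁ ≤ 1)
    (hpos : ∀ t : ℝ, 0 < t → 0 < ω t)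
    (hmono : StrictMonoOn ω (Set.Ioi (0:ℝ)))
    (hinv_pos : ∀ t : ℝ, 0 < t → 0 < ωinv t)
    (hinv₁ : ∀ t : ℝ, 0 < t → ω (ωinv t) = t)
    (hinv₂ : ∀ t : ℝ, 0 < t → ωinv (ω t) = t)
    (ρ : ℝ → ℝ) (hρ : ∀ t : ℝ, 0 < t → ρ t = t⁻¹ / ωinv t⁻¹) :
    (LowerType ω p₀ ∧ UpperType ω p₁) ↔
      (LowerType ρ (1 / p₁ - 1) ∧ UpperType ρ (1 / p₀ - 1)) := by
  have hp₁pos : 0 < p₁ := lt_of_lt_of_le hp₀ hp₀₁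
  have hωmono : ∀ a b : ℝ, 0 < a → a ≤ b → ω a ≤ ω b := by
    intro a b ha hab
    rcases eq_or_lt_of_le hab with rfl | hlt
    · exact le_refl _
    · exact (hmono (Set.mem_Ioi.mpr ha) (Set.mem_Ioi.mpr (ha.trans hlt)) hlt).le
  have hinvmono : ∀ a b : ℝ, 0 < a → a ≤ b → ωinv a ≤ ωinv b := by
    intro a b ha hab
    by_contra hcon
    push_neg at hcon
    have hb : 0 < b := lt_of_lt_of_le ha hab
    have := hmono (Set.mem_Ioi.mpr (hinv_pos b hb)) (Set.mem_Ioi.mpr (hinv_pos a ha)) hcon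
    rw [hinv₁ a ha, hinv₁ b hb] at this
    exact absurd hab (not_le.mpr this)
  have h1p₀ : 0 < 1/p₀ := by positivity
  have h1p₁ : 0 < 1/p₁ := by positivity
  constructor
  · rintro ⟨hl, hu⟩
    refine ⟨?_, ?_⟩
    · exact (rho_lower_iff ωinv ρ hinv_pos hρ (1/p₁)).mpr
        (upper_to_lower_inv ω ωinv p₁ hp₁pos hpos hinv_pos hinv₁ hinv₂ hinvmono hu)
    · exact (rho_upper_iff ωinv ρ hinv_pos hρ (1/p₀)).mpr
        (lower_to_upper_inv ω ωinv p₀ hp₀ hpos hinv_pos hinv₁ hinv₂ hinvmono hl)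
  · rintro ⟨hl, hu⟩
    have hl' : LowerType ωinv (1/p₁) :=
      (rho_lower_iff ωinv ρ hinv_pos hρ (1/p₁)).mp hl
    have hu' : UpperType ωinv (1/p₀) :=
      (rho_upper_iff ωinv ρ hinv_pos hρ (1/p₀)).mp hu
    constructor
    · have := upper_to_lower_inv ωinv ω (1/p₀) h1p₀ hinv_pos hpos hinv₂ hinv₁ hωmono hu'
      rwa [one_div_one_div] at this
    · have := lower_to_upper_inv ωinv ω (1/p₁) h1p₁ hinv_pos hpos hinv₂ hinv₁ hωmono hl'
      rwa [one_div_one_div] at this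
end

section
/- Let ω : (0,∞) → (0,∞) be concave of strictly lower type p ∈ (0,1], and define ω̃(t) = ∫₀ᵗ ω(s)/s ds for t > 0. Then ω̃ is finite, and there exists a constant C ≥ 1 such that C^{-1} ω(t) ≤ ω̃(t) ≤ C ω(t) for all t > 0. -/
open MeasureTheory



/-- `ω̃(t) = ∫₀ᵗ ω(s)/s ds` is finite and comparable to `ω`. -/
theorem tilde_omega_equivalent (ω : ℝ → ℝ) (p : ℝ) (hp0 : 0 < p) (hp1 : p ≤ 1)
    (hpos : ∀ t : ℝ, 0 < t → 0 < ω t)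
    (hconc : ∀ s t θ : ℝ, 0 < s → 0 < t → 0 ≤ θ → θ ≤ 1 →
      θ * ω s + (1 - θ) * ω t ≤ ω (θ * s + (1 - θ) * t))
    (hlow : ∀ s : ℝ, 0 < s → ∀ t : ℝ, t ∈ Set.Ioo (0:ℝ) 1 → ω (s * t) ≤ t ^ p * ω s) :
    (∀ t : ℝ, 0 < t → IntegrableOn (fun s => ω s / s) (Set.Ioo 0 t)) ∧
    ∃ C : ℝ, 1 ≤ C ∧ ∀ t : ℝ, 0 < t →
      C⁻¹ * ω t ≤ ∫ s in Set.Ioo (0:ℝ) t, ω s / s ∧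
      (∫ s in Set.Ioo (0:ℝ) t, ω s / s) ≤ C * ω t := by
  -- concavity in mathlib form
  have hconcOn : ConcaveOn ℝ (Set.Ioi 0) ω := by
    refine ⟨convex_Ioi 0, fun x hx y hy a b ha hb hab => ?_⟩
    have := hconc x y a hx hy ha (by linarith)
    simp only [smul_eq_mul]
    have hb' : b = 1 - a := by linarith
    rw [hb']
    exact this
  have hcont : ContinuousOn ω (Set.Ioi 0) := hconcOn.continuousOn isOpen_Ioi
  -- pointwise upper bound on (0,t)
  have hub : ∀ t : ℝ, 0 < t → ∀ s ∈ Set.Ioo (0:ℝ) t,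
      ω s / s ≤ s ^ (p - 1) * (ω t / t ^ p) := by
    intro t ht s hs
    obtain ⟨hs0, hst⟩ := hs
    have hdiv : s / t ∈ Set.Ioo (0:ℝ) 1 := ⟨div_pos hs0 ht, (div_lt_one ht).2 hst⟩
    have h1 := hlow t ht (s / t) hdiv
    rw [mul_div_cancel₀ _ (ne_of_gt ht)] at h1
    have h2 : (s / t) ^ p = s ^ p / t ^ p := Real.div_rpow hs0.le ht.le p
    rw [h2] at h1
    have htp : (0:ℝ) < t ^ p := Real.rpow_pos_of_pos ht p
    rw [div_le_iff₀ hs0]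
    calc ω s ≤ s ^ p / t ^ p * ω t := h1
      _ = s ^ (p - 1) * (ω t / t ^ p) * s := by
          rw [Real.rpow_sub hs0, Real.rpow_one]; field_simp
  -- integrability
  have hint : ∀ t : ℝ, 0 < t → IntegrableOn (fun s => ω s / s) (Set.Ioo 0 t) := by
    intro t ht
    have hg : IntegrableOn (fun s : ℝ => s ^ (p - 1) * (ω t / t ^ p)) (Set.Ioo 0 t) :=
      ((intervalIntegral.integrableOn_Ioo_rpow_iff ht).2 (by linarith)).mul_const _
    refine Integrable.mono' hg ?_ ?_
    · refine ContinuousOn.aestronglyMeasurable ?_ measurableSet_Ioo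
      exact ContinuousOn.div
        (hcont.mono (fun x hx => hx.1)) continuousOn_id (fun x hx => ne_of_gt hx.1)
    · filter_upwards [ae_restrict_mem measurableSet_Ioo] with s hs
      rw [Real.norm_eq_abs, abs_of_pos (div_pos (hpos s hs.1) hs.1)]
      exact hub t ht s hs
  have hp' : 0 < 1/p := by positivity
  refine ⟨hint, 6 + 1/p, by linarith, fun t ht => ?_⟩
  have hωt := hpos t ht
  have hC : (0:ℝ) < 6 + 1/p := by positivity
  constructor
  · -- lower bound
    -- for s ∈ (t/2, t), ω s ≥ ω t / 3
    have hlb : ∀ s ∈ Set.Ioo (t/2) t, ω t / (3 * t) ≤ ω s / s := by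
      intro s hs
      obtain ⟨hs1, hs2⟩ := hs
      have hs0 : 0 < s := lt_trans (by linarith) hs1
      set θ : ℝ := (s - t/4) / (3*t/4) with hθdef
      have hθ0 : 0 ≤ θ := by
        apply div_nonneg <;> nlinarith
      have hθ1 : θ ≤ 1 := by
        rw [div_le_one (by linarith)]; nlinarith
      have hθ3 : 1/3 ≤ θ := by
        rw [le_div_iff₀ (by linarith)]; nlinarith
      have hcomb : θ * t + (1 - θ) * (t/4) = s := by
        have h34 : θ * (3*t/4) = s - t/4 := by
          rw [hθdef]; exact div_mul_cancel₀ _ (by positivity)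
        linarith
      have h := hconc t (t/4) θ ht (by linarith) hθ0 hθ1
      rw [hcomb] at h
      have hωt4 := hpos (t/4) (by linarith)
      have hωs : ω t / 3 ≤ ω s := by nlinarith
      rw [div_le_div_iff₀ (by positivity) hs0]
      nlinarith
    have hmono : (∫ s in Set.Ioo (t/2) t, ω s / s) ≤ ∫ s in Set.Ioo (0:ℝ) t, ω s / s := by
      apply setIntegral_mono_set (hint t ht)
      · filter_upwards [ae_restrict_mem measurableSet_Ioo] with s hs
        exact (div_pos (hpos s hs.1) hs.1).le
      · exact Filter.Eventually.of_forall (fun s hs => ⟨by linarith [hs.1], hs.2⟩)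
    have hconst : (∫ s in Set.Ioo (t/2) t, ω t / (3*t)) ≤ ∫ s in Set.Ioo (t/2) t, ω s / s := by
      apply setIntegral_mono_on (integrableOn_const (by simp [Real.volume_Ioo]))
        ((hint t ht).mono_set (fun s hs => ⟨by linarith [hs.1], hs.2⟩)) measurableSet_Ioo
      exact hlb
    rw [setIntegral_const, measureReal_def, Real.volume_Ioo, ENNReal.toReal_ofReal (by linarith)] at hconst
    have hval : (t - t/2) • (ω t / (3*t)) = ω t / 6 := by
      rw [smul_eq_mul]; field_simp; ring
    rw [hval] at hconst
    have hCinv : (6 + 1/p)⁻¹ * ω t ≤ ω t / 6 := by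
      have h6 : (6 + 1/p)⁻¹ ≤ 6⁻¹ := inv_anti₀ (by norm_num) (by linarith)
      calc (6 + 1/p)⁻¹ * ω t ≤ 6⁻¹ * ω t := mul_le_mul_of_nonneg_right h6 hωt.le
        _ = ω t / 6 := by ring
    linarith
  · -- upper bound
    have hg : IntegrableOn (fun s : ℝ => s ^ (p - 1) * (ω t / t ^ p)) (Set.Ioo 0 t) :=
      ((intervalIntegral.integrableOn_Ioo_rpow_iff ht).2 (by linarith)).mul_const _
    have h1 : (∫ s in Set.Ioo (0:ℝ) t, ω s / s)
        ≤ ∫ s in Set.Ioo (0:ℝ) t, s ^ (p - 1) * (ω t / t ^ p) :=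
      setIntegral_mono_on (hint t ht) hg measurableSet_Ioo (hub t ht)
    have h2 : (∫ s in Set.Ioo (0:ℝ) t, s ^ (p - 1) * (ω t / t ^ p)) = ω t / p := by
      rw [show (∫ s in Set.Ioo (0:ℝ) t, s ^ (p - 1) * (ω t / t ^ p))
          = (∫ s in Set.Ioo (0:ℝ) t, s ^ (p - 1)) * (ω t / t ^ p) from
        integral_mul_const _ _]
      have hir : (∫ x in (0:ℝ)..t, x ^ (p-1)) = (t ^ (p-1+1) - 0 ^ (p-1+1))/(p-1+1) :=
        integral_rpow (Or.inl (by linarith))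
      rw [← integral_Ioc_eq_integral_Ioo,
        ← intervalIntegral.integral_of_le ht.le, hir]
      rw [sub_add_cancel, Real.zero_rpow hp0.ne', sub_zero]
      have htp : (0:ℝ) < t ^ p := Real.rpow_pos_of_pos ht p
      field_simp
    have h3 : ω t / p ≤ (6 + 1/p) * ω t := by
      rw [div_eq_mul_inv, mul_comm]
      apply mul_le_mul_of_nonneg_right _ hωt.le
      rw [one_div]
      linarith
    linarith
end

section
/- Let ω be concave of strictly lower type p ∈ (0,1] and ω̃(t) = ∫₀ᵗ ω(s)/s ds. Then ω̃ is strictly increasing, concave, and of strictly lower type p. -/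
open MeasureTheory

/-- `ω̃(t) = ∫₀ᵗ ω(s)/s ds` is strictly increasing, concave, and of strictly lower type `p`. -/
theorem tilde_omega_properties (ω : ℝ → ℝ) (p : ℝ) (hp0 : 0 < p) (hp1 : p ≤ 1)
    (hpos : ∀ t : ℝ, 0 < t → 0 < ω t)
    (hconc : ∀ s t θ : ℝ, 0 < s → 0 < t → 0 ≤ θ → θ ≤ 1 →
      θ * ω s + (1 - θ) * ω t ≤ ω (θ * s + (1 - θ) * t))
    (hlow : ∀ s : ℝ, 0 < s → ∀ t : ℝ, t ∈ Set.Ioo (0:ℝ) 1 → ω (s * t) ≤ t ^ p * ω s)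
    (ωt : ℝ → ℝ) (hωt : ∀ t : ℝ, 0 < t → ωt t = ∫ s in Set.Ioo (0:ℝ) t, ω s / s)
    (hfin : ∀ t : ℝ, 0 < t → IntegrableOn (fun s => ω s / s) (Set.Ioo 0 t)) :
    StrictMonoOn ωt (Set.Ioi (0:ℝ)) ∧
    (∀ s t θ : ℝ, 0 < s → 0 < t → 0 ≤ θ → θ ≤ 1 →
      θ * ωt s + (1 - θ) * ωt t ≤ ωt (θ * s + (1 - θ) * t)) ∧
    (∀ s : ℝ, 0 < s → ∀ t : ℝ, t ∈ Set.Ioo (0:ℝ) 1 → ωt (s * t) ≤ t ^ p * ωt s) := by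
  set f : ℝ → ℝ := fun s => ω s / s with hf
  -- interval integrability on [0, b]
  have hII : ∀ b : ℝ, 0 < b → IntervalIntegrable f volume 0 b := by
    intro b hb
    rw [intervalIntegrable_iff, Set.uIoc_of_le hb.le]
    exact (integrableOn_Ioc_iff_integrableOn_Ioo).mpr (hfin b hb)
  have hII' : ∀ a b : ℝ, 0 < a → 0 < b → IntervalIntegrable f volume a b := by
    intro a b ha hb
    exact (hII a ha).symm.trans (hII b hb)
  -- ωt as interval integral
  have hωt' : ∀ b : ℝ, 0 < b → ωt b = ∫ x in (0:ℝ)..b, f x := by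
    intro b hb
    rw [hωt b hb, intervalIntegral.integral_of_le hb.le, integral_Ioc_eq_integral_Ioo]
  -- additivity
  have hadd : ∀ a b : ℝ, 0 < a → 0 < b → ωt b = ωt a + ∫ x in a..b, f x := by
    intro a b ha hb
    rw [hωt' a ha, hωt' b hb,
      intervalIntegral.integral_add_adjacent_intervals (hII a ha) (hII' a b ha hb)]
  -- f is antitone on (0, ∞)
  have hanti : ∀ s t : ℝ, 0 < s → s ≤ t → f t ≤ f s := by
    intro s t hs hst
    have ht : 0 < t := lt_of_lt_of_le hs hst
    rcases eq_or_lt_of_le hst with rfl | hlt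
    · exact le_rfl
    have key : ∀ ε : ℝ, ε ∈ Set.Ioo (0:ℝ) s → (s - ε) / (t - ε) * ω t ≤ ω s := by
      intro ε hε
      have hεs : ε < s := hε.2
      have hεt : ε < t := hεs.trans hlt
      have hden : (0:ℝ) < t - ε := by linarith
      have hθ0 : 0 ≤ (s - ε) / (t - ε) := div_nonneg (by linarith) hden.le
      have hθ1 : (s - ε) / (t - ε) ≤ 1 := by
        rw [div_le_one hden]; linarith
      have h1 := hconc t ε ((s - ε) / (t - ε)) ht hε.1 hθ0 hθ1
      have harg : (s - ε) / (t - ε) * t + (1 - (s - ε) / (t - ε)) * ε = s := by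
        field_simp
        ring
      rw [harg] at h1
      have h2 : 0 ≤ (1 - (s - ε) / (t - ε)) * ω ε :=
        mul_nonneg (by linarith) (hpos ε hε.1).le
      linarith
    have hlim : Filter.Tendsto (fun ε : ℝ => (s - ε) / (t - ε) * ω t)
        (nhdsWithin 0 (Set.Ioi 0)) (nhds (s / t * ω t)) := by
      have hc : ContinuousAt (fun ε : ℝ => (s - ε) / (t - ε) * ω t) 0 := by
        apply ContinuousAt.mul _ continuousAt_const
        exact ContinuousAt.div (by fun_prop) (by fun_prop) (by simpa using ht.ne')
      simpa using hc.tendsto.mono_left nhdsWithin_le_nhds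
    have hev : ∀ᶠ ε in nhdsWithin (0:ℝ) (Set.Ioi 0),
        (s - ε) / (t - ε) * ω t ≤ ω s := by
      filter_upwards [Ioo_mem_nhdsGT_of_mem ⟨le_refl (0:ℝ), hs⟩] with ε hε
      exact key ε hε
    have hfinal : s / t * ω t ≤ ω s := le_of_tendsto hlim hev
    rw [hf]
    rw [div_le_div_iff₀ ht hs]
    rw [div_mul_eq_mul_div, div_le_iff₀ ht] at hfinal
    linarith
  -- nonnegativity of f
  have hfnn : ∀ x : ℝ, 0 < x → 0 < f x := fun x hx => div_pos (hpos x hx) hx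
  -- Strict monotonicity
  have hmono : StrictMonoOn ωt (Set.Ioi (0:ℝ)) := by
    intro a ha b hb hab
    simp only [Set.mem_Ioi] at ha hb
    have hpos' : 0 < ∫ x in a..b, f x := by
      apply intervalIntegral.intervalIntegral_pos_of_pos_on (hII' a b ha hb)
        (fun x hx => hfnn x (ha.trans hx.1)) hab
    rw [hadd a b ha hb]
    linarith
  refine ⟨hmono, ?_, ?_⟩
  · -- concavity
    have main : ∀ s t θ : ℝ, 0 < s → 0 < t → 0 ≤ θ → θ ≤ 1 → s ≤ t →
        θ * ωt s + (1 - θ) * ωt t ≤ ωt (θ * s + (1 - θ) * t) := by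
      intro s t θ hs ht hθ0 hθ1 hst
      set u : ℝ := θ * s + (1 - θ) * t with hu
      have hsu : s ≤ u := by nlinarith
      have hut : u ≤ t := by nlinarith
      have hu0 : 0 < u := lt_of_lt_of_le hs hsu
      have h1 : (u - s) • f u ≤ ∫ x in s..u, f x := by
        rw [← intervalIntegral.integral_const]
        apply intervalIntegral.integral_mono_on hsu
          (intervalIntegrable_const) (hII' s u hs hu0)
        intro x hx
        exact hanti x u (lt_of_lt_of_le hs hx.1) hx.2
      have h2 : (∫ x in u..t, f x) ≤ (t - u) • f u := by
        rw [← intervalIntegral.integral_const]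
        apply intervalIntegral.integral_mono_on hut (hII' u t hu0 ht)
          (intervalIntegrable_const)
        intro x hx
        exact hanti u x hu0 hx.1
      have e1 : ωt u = ωt s + ∫ x in s..u, f x := hadd s u hs hu0
      have e2 : ωt t = ωt u + ∫ x in u..t, f x := hadd u t hu0 ht
      have hid : θ * ((u - s) * f u) = (1 - θ) * ((t - u) * f u) := by
        rw [hu]; ring
      have h1' := mul_le_mul_of_nonneg_left h1 hθ0
      have h2' := mul_le_mul_of_nonneg_left h2 (by linarith : (0:ℝ) ≤ 1 - θ)
      simp only [smul_eq_mul] at h1' h2'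
      nlinarith [h1', h2', hid]
    intro s t θ hs ht hθ0 hθ1
    rcases le_total s t with hst | hst
    · exact main s t θ hs ht hθ0 hθ1 hst
    · have := main t s (1 - θ) ht hs (by linarith) (by linarith) hst
      have harg : (1 - θ) * t + (1 - (1 - θ)) * s = θ * s + (1 - θ) * t := by ring
      rw [harg] at this
      linarith
  · -- lower type
    intro s hs t ht
    have ht0 : 0 < t := ht.1
    have hst : 0 < s * t := mul_pos hs ht0
    -- change of variables
    have hcv0 : (t • ∫ x in (0:ℝ)..s, f (t * x)) = ∫ x in (0:ℝ)..(s * t), f x := by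
      have h := intervalIntegral.smul_integral_comp_mul_left (a := 0) (b := s) f t
      simpa [mul_comm] using h
    have hcv : ωt (s * t) = ∫ x in (0:ℝ)..s, t * f (t * x) := by
      rw [hωt' (s * t) hst, ← hcv0, intervalIntegral.integral_const_mul, smul_eq_mul]
    have heq : ∀ x : ℝ, t * f (t * x) = ω (t * x) / x := by
      intro x
      rcases eq_or_ne x 0 with rfl | hx
      · simp [hf]
      · rw [hf]
        simp only
        rw [mul_div_assoc']
        rw [mul_div_mul_left _ _ ht0.ne']
    have hcv2 : ωt (s * t) = ∫ x in (0:ℝ)..s, ω (t * x) / x := by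
      rw [hcv]; congr 1; funext x; exact heq x
    have hint1 : IntervalIntegrable (fun x => ω (t * x) / x) volume 0 s := by
      have h1 : IntervalIntegrable (fun x => f (t * x)) volume (0 / t) ((s * t) / t) :=
        (hII (s * t) hst).comp_mul_left (c := t)
      rw [zero_div, mul_div_cancel_right₀ s ht0.ne'] at h1
      have h2 := h1.const_mul t
      have hfun : (fun x => ω (t * x) / x) = fun x => t * f (t * x) :=
        funext fun x => (heq x).symm
      rw [hfun]
      exact h2
    have hint2 : IntervalIntegrable (fun x => t ^ p * (ω x / x)) volume 0 s :=
      (hII s hs).const_mul _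
    have hcmp : (∫ x in (0:ℝ)..s, ω (t * x) / x) ≤ ∫ x in (0:ℝ)..s, t ^ p * (ω x / x) := by
      apply intervalIntegral.integral_mono_on hs.le hint1 hint2
      intro x hx
      rcases eq_or_lt_of_le hx.1 with rfl | hx0
      · simp
      · have h := hlow x hx0 t ht
        rw [mul_comm t x, ← mul_div_assoc]
        gcongr
    rw [hcv2, hωt' s hs, ← intervalIntegral.integral_const_mul]
    exact hcmp
end

section
/- Let ω : (0,∞) → (0,∞) be continuous, strictly increasing, concave, of strictly lower type p_ω ∈ (0,1], and bijective onto (0,∞). Define ρ(t) = t^{-1}/ω^{-1}(t^{-1}). Then ρ is nonincreasing-type controlled: ρ is of upper type 1/p_ω − 1, i.e., there exists C > 0 such that ρ(st) ≤ C t^{1/p_ω − 1} ρ(s) for all t ≥ 1 and s > 0. -/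
/-- If `ω` is continuous, strictly increasing, concave, of strictly lower type
`p_ω ∈ (0,1]` and bijective on `(0,∞)`, then `ρ(t) = t⁻¹/ω⁻¹(t⁻¹)` is of upper
type `1/p_ω - 1`. -/
theorem rho_upper_type (ω ωinv : ℝ → ℝ) (p : ℝ) (hp0 : 0 < p) (hp1 : p ≤ 1)
    (hcont : ContinuousOn ω (Set.Ioi (0:ℝ)))
    (hmono : StrictMonoOn ω (Set.Ioi (0:ℝ)))
    (hpos : ∀ t : ℝ, 0 < t → 0 < ω t)
    (hconc : ∀ s t θ : ℝ, 0 < s → 0 < t → 0 ≤ θ → θ ≤ 1 →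
      θ * ω s + (1 - θ) * ω t ≤ ω (θ * s + (1 - θ) * t))
    (hlow : ∀ s : ℝ, 0 < s → ∀ t : ℝ, t ∈ Set.Ioo (0:ℝ) 1 → ω (s * t) ≤ t ^ p * ω s)
    (hinv_pos : ∀ t : ℝ, 0 < t → 0 < ωinv t)
    (hinv₁ : ∀ t : ℝ, 0 < t → ω (ωinv t) = t)
    (hinv₂ : ∀ t : ℝ, 0 < t → ωinv (ω t) = t)
    (ρ : ℝ → ℝ) (hρ : ∀ t : ℝ, 0 < t → ρ t = t⁻¹ / ωinv t⁻¹) :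
    ∃ C : ℝ, 0 < C ∧ ∀ t : ℝ, 1 ≤ t → ∀ s : ℝ, 0 < s →
      ρ (s * t) ≤ C * t ^ (1 / p - 1) * ρ s := by
  have hinv_mono : ∀ a b : ℝ, 0 < a → a ≤ b → ωinv a ≤ ωinv b := by
    intro a b ha hab
    by_contra h
    push_neg at h
    have hb : 0 < b := lt_of_lt_of_le ha hab
    have := hmono (Set.mem_Ioi.2 (hinv_pos b hb)) (Set.mem_Ioi.2 (hinv_pos a ha)) h
    rw [hinv₁ a ha, hinv₁ b hb] at this
    linarith
  refine ⟨1, one_pos, ?_⟩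
  intro t ht s hs
  rcases eq_or_lt_of_le ht with h1 | h1
  · rw [← h1]
    simp [Real.one_rpow]
  have ht0 : (0:ℝ) < t := lt_trans one_pos h1
  set u := t ^ (-(1/p)) with hu
  have hu0 : 0 < u := Real.rpow_pos_of_pos ht0 _
  have hu1 : u < 1 := by
    apply Real.rpow_lt_one_of_one_lt_of_neg h1
    rw [neg_lt, neg_zero]
    positivity
  have hp_ne : p ≠ 0 := ne_of_gt hp0
  have hup : u ^ p = t⁻¹ := by
    rw [hu, ← Real.rpow_mul ht0.le]
    have : -(1/p) * p = -1 := by field_simp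
    rw [this, Real.rpow_neg_one]
  have hsinv : 0 < s⁻¹ := inv_pos.2 hs
  have hws : 0 < ωinv s⁻¹ := hinv_pos _ hsinv
  have key : u * ωinv s⁻¹ ≤ ωinv ((s*t)⁻¹) := by
    have hlow' := hlow (ωinv s⁻¹) hws u ⟨hu0, hu1⟩
    rw [hinv₁ _ hsinv] at hlow'
    have hω : 0 < ω (ωinv s⁻¹ * u) := hpos _ (by positivity)
    have h2' := hinv_mono _ _ hω hlow'
    rw [hinv₂ _ (by positivity)] at h2'
    have hst : (s*t)⁻¹ = u^p * s⁻¹ := by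
      rw [hup, mul_inv]; ring
    rw [hst, mul_comm]
    exact h2'
  have hst0 : (0:ℝ) < s * t := by positivity
  have hinvst : 0 < ωinv ((s*t)⁻¹) := hinv_pos _ (by positivity)
  rw [hρ _ hst0, hρ _ hs]
  have step1 : (s*t)⁻¹ / ωinv ((s*t)⁻¹) ≤ (s*t)⁻¹ / (u * ωinv s⁻¹) :=
    div_le_div_of_nonneg_left (by positivity) (by positivity) key
  have heq : u * t ^ (1/p - 1) = t⁻¹ := by
    rw [hu, ← Real.rpow_add ht0, ← Real.rpow_neg_one t]
    ring_nf
  calc (s*t)⁻¹ / ωinv ((s*t)⁻¹) ≤ (s*t)⁻¹ / (u * ωinv s⁻¹) := step1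
    _ = 1 * t ^ (1/p - 1) * (s⁻¹ / ωinv s⁻¹) := by
        have heq2 : t ^ (1/p - 1) = t⁻¹ / u := by
          rw [eq_div_iff hu0.ne', mul_comm]; exact heq
        rw [one_mul, heq2, div_mul_div_comm, mul_inv]
        ring_nf
end
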